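/- Let K be a convex body in ℝⁿ and ρ₂ > ρ₁ ≥ 0. The map Φ((ξ,ν),ρ) = ξ + ρν is a surjection from N K × [ρ₁,ρ₂] onto the annulus A_K(ρ₁,ρ₂) = {x ∈ closure(ℝⁿ \ K) : ρ₁ ≤ dist(x,K) ≤ ρ₂}. -/

import Mathlib

open Metric Set
open scoped RealInnerProductSpace

/-- The map `Φ((ξ,ν),ρ) = ξ + ρ • ν` is a surjection from
`N K × [ρ₁,ρ₂]` onto the annulus `A_K(ρ₁,ρ₂) = {x ∈ closure(Kᶜ) : ρ₁ ≤ dist(x,K) ≤ ρ₂}`. -/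
theorem stmt1 {n : ℕ} (K : Set (EuclideanSpace ℝ (Fin n)))
    (hKcomp : IsCompact K) (hKconv : Convex ℝ K) (hKint : (interior K).Nonempty)
    (ρ₁ ρ₂ : ℝ) (hρ₁ : 0 ≤ ρ₁) (hρ₁₂ : ρ₁ < ρ₂)
    (x : EuclideanSpace ℝ (Fin n))
    (hx : x ∈ closure Kᶜ) (hx₁ : ρ₁ ≤ infDist x K) (hx₂ : infDist x K ≤ ρ₂) :
    ∃ ξ ν : EuclideanSpace ℝ (Fin n), ∃ ρ : ℝ,
      ξ ∈ frontier K ∧ ‖ν‖ = 1 ∧ (∀ y ∈ K, inner ℝ (y - ξ) ν ≤ (0:ℝ)) ∧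
      ρ ∈ Icc ρ₁ ρ₂ ∧ ξ + ρ • ν = x := by
  have hKne : K.Nonempty := hKint.mono interior_subset
  set d := infDist x K with hd
  rcases eq_or_lt_of_le (infDist_nonneg (s := K) (x := x)) with hd0 | hdpos
  · -- d = 0 : x is on the boundary
    have hxK : x ∈ K :=
      (hKcomp.isClosed.mem_iff_infDist_zero hKne).mpr hd0.symm
    have hxnotint : x ∉ interior K := by
      intro h
      have := closure_compl (s := K) ▸ hx
      exact this h
    obtain ⟨z, hz⟩ := hKint
    obtain ⟨f, hf⟩ := geometric_hahn_banach_open_point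
      (hKconv.interior) isOpen_interior hxnotint
    have hfne : f ≠ 0 := by
      intro h
      have := hf z hz
      simp [h] at this
    set v := (InnerProductSpace.toDual ℝ (EuclideanSpace ℝ (Fin n))).symm f with hv
    have hvf : ∀ y, ⟪v, y⟫ = f y := fun y => InnerProductSpace.toDual_symm_apply
    have hvne : v ≠ 0 := by
      intro h
      apply hfne
      ext y
      have := hvf y
      rw [h, inner_zero_left] at this
      simp [← this]
    have hnv : 0 < ‖v‖ := norm_pos_iff.mpr hvne
    refine ⟨x, ‖v‖⁻¹ • v, 0, ?_, ?_, ?_, ?_, by simp⟩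
    · rw [frontier_eq_closure_inter_closure]
      exact ⟨subset_closure hxK, hx⟩
    · simp [norm_smul, abs_of_pos (inv_pos.mpr hnv), inv_mul_cancel₀ hnv.ne']
    · intro y hy
      -- f y ≤ f x for y ∈ K, by taking limits along the open segment to z
      have hfy : f y ≤ f x := by
        have htend : Filter.Tendsto (fun t : ℝ => f ((1 - t) • y + t • z)) (nhdsWithin 0 (Ioi 0))
            (nhds (f y)) := by
          have hc : Continuous fun t : ℝ => f ((1 - t) • y + t • z) := by fun_prop
          have h2 : Filter.Tendsto (fun t : ℝ => f ((1 - t) • y + t • z)) (nhds 0)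
              (nhds (f y)) := by simpa using hc.tendsto 0
          exact h2.mono_left nhdsWithin_le_nhds
        refine le_of_tendsto htend ?_
        filter_upwards [Ioo_mem_nhdsGT_of_mem (by norm_num : (0:ℝ) ∈ Ico 0 1)] with t ht
        refine (hf _ ?_).le
        exact hKconv.combo_closure_interior_mem_interior (subset_closure hy) hz
          (by linarith [ht.1, ht.2]) ht.1 (by ring)
      have : ⟪y - x, ‖v‖⁻¹ • v⟫ = ‖v‖⁻¹ * f (y - x) := by
        rw [real_inner_smul_right, real_inner_comm, hvf]
      rw [this]
      have : f (y - x) ≤ 0 := by rw [map_sub]; linarith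
      exact mul_nonpos_of_nonneg_of_nonpos (by positivity) this
    · exact ⟨by linarith, by linarith⟩
  · -- d > 0 : project x onto K
    obtain ⟨ξ, hξK, hξd⟩ := hKcomp.exists_infDist_eq_dist hKne x
    have hnorm : ‖x - ξ‖ = d := by rw [hd, hξd, dist_eq_norm]
    have hiInf : ‖x - ξ‖ = ⨅ w : K, ‖x - w‖ := by
      rw [hnorm, hd, infDist_eq_iInf]
      simp_rw [dist_eq_norm]
    have hsup : ∀ w ∈ K, ⟪x - ξ, w - ξ⟫ ≤ 0 :=
      (norm_eq_iInf_iff_real_inner_le_zero hKconv hξK).mp hiInf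
    have hne : ‖x - ξ‖ ≠ 0 := by rw [hnorm]; exact hdpos.ne'
    set ν := ‖x - ξ‖⁻¹ • (x - ξ) with hν
    have hxne : x - ξ ≠ 0 := fun h => hne (by rw [h, norm_zero])
    refine ⟨ξ, ν, d, ?_, ?_, ?_, ⟨hx₁, hx₂⟩, ?_⟩
    · rw [frontier_eq_closure_inter_closure]
      refine ⟨subset_closure hξK, ?_⟩
      have htend : Filter.Tendsto (fun t : ℝ => ξ + t • (x - ξ)) (nhdsWithin 0 (Ioi 0))
          (nhds ξ) := by
        have hc : Continuous fun t : ℝ => ξ + t • (x - ξ) := by fun_prop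
        have h2 : Filter.Tendsto (fun t : ℝ => ξ + t • (x - ξ)) (nhds 0) (nhds ξ) := by
          simpa using hc.tendsto 0
        exact h2.mono_left nhdsWithin_le_nhds
      refine mem_closure_of_tendsto htend ?_
      filter_upwards [self_mem_nhdsWithin] with t (ht : 0 < t)
      intro hmem
      have := hsup _ hmem
      rw [add_sub_cancel_left, real_inner_smul_right, real_inner_self_eq_norm_sq] at this
      have := mul_pos ht (pow_pos (norm_pos_iff.mpr hxne) 2)
      linarith
    · rw [hν, norm_smul, norm_inv, norm_norm, inv_mul_cancel₀ hne]
    · intro y hy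
      rw [hν, real_inner_smul_right]
      have h1 := hsup y hy
      have h2 : ⟪y - ξ, x - ξ⟫ ≤ 0 := by rwa [real_inner_comm]
      exact mul_nonpos_of_nonneg_of_nonpos (by positivity) h2
    · rw [hν, smul_smul, ← hnorm, mul_inv_cancel₀ hne, one_smul]
      abel
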